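/- Let Λ̃ be an even unimodular lattice, v ∈ Λ̃ with v² ≠ 0, and g an isometry of v^⊥ that acts as ±id on the discriminant group of v^⊥. Then g extends to an isometry g̃ of Λ̃ with g̃(v) = ±v (sign matching the action on the discriminant group) and g̃|_{v^⊥} = g. -/
import Mathlib


lemma extend_aux {M K : Type*} [AddCommGroup M] [Module ℤ M]
    [AddCommGroup K] [Module ℤ K]
    (B : M →ₗ[ℤ] M →ₗ[ℤ] ℤ)
    (hsymm : ∀ x y, B x y = B y x)
    (hinj : Function.Injective (B : M → M →ₗ[ℤ] ℤ))
    (v : M) (hv : B v v ≠ 0)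
    (ι : K →ₗ[ℤ] M)
    (hrange : LinearMap.range ι = LinearMap.ker (B v))
    (g : K ≃ₗ[ℤ] K)
    (hg : ∀ x y : K, B (ι (g x)) (ι (g y)) = B (ι x) (ι y))
    (ε : ℤ) (hε2 : ε * ε = 1)
    (hdisc : ∀ f : K →ₗ[ℤ] ℤ, ∃ y : K,
      ∀ x : K, f (g.symm x) - ε * f x = B (ι y) (ι x)) :
    ∃ F : M →ₗ[ℤ] M,
      (∀ x y, B (F x) (F y) = B x y) ∧
      F v = ε • v ∧
      (∀ x : K, F (ι x) = ι (g x)) := by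
  -- helper lemmas for scalar manipulation (avoiding smul-instance issues)
  have hBs : ∀ (z w : M) (c : ℤ), B z (c • w) = c * B z w := by
    intro z w c
    rw [map_zsmul, zsmul_eq_mul]
    simp
  have hBs1 : ∀ (z w : M) (c : ℤ), B (c • z) w = c * B z w := by
    intro z w c
    rw [hsymm, hBs, hsymm]
  -- everything in the image of ι is orthogonal to v
  have hperp : ∀ x : K, B v (ι x) = 0 := by
    intro x
    have : ι x ∈ LinearMap.ker (B v) := hrange ▸ LinearMap.mem_range_self ι x
    exact this
  -- decomposition of a general element
  have decomp : ∀ m : M, ∃ x : K, ι x = (B v v) • m - (B v m) • v := by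
    intro m
    have hmem : (B v v) • m - (B v m) • v ∈ LinearMap.ker (B v) := by
      simp only [LinearMap.mem_ker, map_sub]
      rw [hBs, hBs]
      ring
    rw [← hrange] at hmem
    exact hmem
  -- radical triviality
  have radical : ∀ z : M, B z v = 0 → (∀ x : K, B z (ι x) = 0) → z = 0 := by
    intro z h1 h2
    apply hinj (a₂ := 0)
    rw [map_zero]
    ext m
    obtain ⟨x, hx⟩ := decomp m
    have h3 := h2 x
    rw [hx, map_sub, hBs, hBs, h1, mul_zero, sub_zero] at h3
    rcases mul_eq_zero.mp h3 with h | h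
    · exact absurd h hv
    · simpa using h
  -- the choice of correction term
  set y : M → K := fun m => Classical.choose (hdisc ((B m).comp ι)) with hy_def
  have hy : ∀ m : M, ∀ x : K,
      B m (ι (g.symm x)) - ε * B m (ι x) = B (ι (y m)) (ι x) := by
    intro m x
    exact Classical.choose_spec (hdisc ((B m).comp ι)) x
  set F0 : M → M := fun m => ε • m + ι (y m) with hF0_def
  have hF0 : ∀ m, F0 m = ε • m + ι (y m) := fun _ => rfl
  have hF : ∀ m : M, ∀ x : K, B (F0 m) (ι (g x)) = B m (ι x) := by
    intro m x
    have h := hy m (g x)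
    rw [g.symm_apply_apply] at h
    rw [hF0, map_add, LinearMap.add_apply, hBs1]
    linarith
  have hF' : ∀ m : M, ∀ x : K, B (F0 m) (ι x) = B m (ι (g.symm x)) := by
    intro m x
    have := hF m (g.symm x)
    rwa [g.apply_symm_apply] at this
  have hFv : ∀ m : M, B (F0 m) v = ε * B m v := by
    intro m
    have h0 : B (ι (y m)) v = 0 := by rw [hsymm]; exact hperp _
    rw [hF0, map_add, LinearMap.add_apply, hBs1, h0, add_zero]
  -- F0 sends ι x to ι (g x)
  have hFι : ∀ x₀ : K, F0 (ι x₀) = ι (g x₀) := by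
    intro x₀
    have hz : F0 (ι x₀) - ι (g x₀) = 0 := by
      apply radical
      · rw [map_sub, LinearMap.sub_apply, hFv, hsymm (ι (g x₀)) v, hperp,
          hsymm (ι x₀) v, hperp]
        ring
      · intro x
        have h1 := hF' (ι x₀) x
        have h2 := hg x₀ (g.symm x)
        rw [g.apply_symm_apply] at h2
        rw [map_sub, LinearMap.sub_apply, h1, ← h2]
        ring
    exact sub_eq_zero.mp hz
  -- F0 sends v to ε • v
  have hFv' : F0 v = ε • v := by
    have hz : F0 v - ε • v = 0 := by
      apply radical
      · rw [map_sub, LinearMap.sub_apply, hFv, hBs1]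
        ring
      · intro x
        rw [map_sub, LinearMap.sub_apply, hF' v x, hperp, hBs1, hperp, mul_zero,
          sub_zero]
    exact sub_eq_zero.mp hz
  -- additivity
  have hadd : ∀ m n : M, F0 (m + n) = F0 m + F0 n := by
    intro m n
    have hBadd : ∀ X Y : M, B (X + Y) = B X + B Y := fun X Y => map_add B X Y
    have hz : F0 (m + n) - (F0 m + F0 n) = 0 := by
      apply radical
      · rw [map_sub, LinearMap.sub_apply, hFv (m + n), hBadd (F0 m) (F0 n),
          LinearMap.add_apply, hFv m, hFv n, hBadd m n, LinearMap.add_apply]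
        ring
      · intro x
        rw [map_sub, LinearMap.sub_apply, hF' (m + n) x, hBadd (F0 m) (F0 n),
          LinearMap.add_apply, hF' m x, hF' n x, hBadd m n, LinearMap.add_apply]
        ring
    exact sub_eq_zero.mp hz
  -- package as a linear map
  set F : M →ₗ[ℤ] M :=
    { toFun := F0
      map_add' := hadd
      map_smul' := fun c m => by
        simp only [RingHom.id_apply]
        exact (congrArg F0 (int_smul_eq_zsmul ‹Module ℤ M› c m)).trans
          ((map_zsmul (AddMonoidHom.mk' F0 (fun a b => hadd a b)) c m).trans
            (int_smul_eq_zsmul ‹Module ℤ M› c (F0 m)).symm) }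
    with hF_def
  have hFeq : ∀ m, F m = F0 m := fun _ => rfl
  -- isometry
  have hiso : ∀ m n : M, B (F m) (F n) = B m n := by
    intro m n
    obtain ⟨x, hx⟩ := decomp n
    have e0 : (B v v) • n = ι x + (B v n) • v := by rw [hx]; abel
    have e1 : (B v v) • F n = ι (g x) + (B v n) • (ε • v) := by
      rw [← map_zsmul F (B v v) n, e0, map_add, map_zsmul, hFeq, hFeq, hFι, hFv']
    have e2 : B (F m) ((B v v) • F n) = B v v * B (F m) (F n) := hBs _ _ _
    have e3 : B (F m) (ι (g x) + (B v n) • (ε • v)) = B m n * B v v := by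
      rw [map_add, hBs, hBs, hFeq, hF m x, hFv, hx, map_sub, hBs, hBs]
      have : ε * (ε * B m v) = B m v := by rw [← mul_assoc, hε2, one_mul]
      rw [this]
      ring
    rw [e1, e3] at e2
    have := e2.symm
    rw [mul_comm (B m n) (B v v)] at this
    exact mul_left_cancel₀ hv this
  exact ⟨F, hiso, hFv', hFι⟩

/-- let `Λ̃` be an even unimodular lattice, `v ∈ Λ̃` with `v² ≠ 0`, and
`g` an isometry of `v^⊥` acting as `ε·id` (`ε = ±1`) on the discriminant group of
`v^⊥`. Then `g` extends to an isometry `g̃` of `Λ̃` with `g̃(v) = ε·v` and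
`g̃|_{v^⊥} = g`. Here `v^⊥` is presented as a ℤ-module `K` with an injective linear
map `ι` onto `{x : B v x = 0}`, and "acts as `ε·id` on the discriminant group" means
that for every `f ∈ (v^⊥)*` the functional `f ∘ g⁻¹ − ε·f` lies in the image of
`v^⊥` in its dual. -/
theorem isometry_of_perp_extends
    {M : Type*} [AddCommGroup M] [Module ℤ M] [Module.Free ℤ M] [Module.Finite ℤ M]
    (B : M →ₗ[ℤ] M →ₗ[ℤ] ℤ)
    (hsymm : ∀ x y, B x y = B y x)
    (heven : ∀ x, Even (B x x))
    (hunimod : Function.Bijective (B : M → M →ₗ[ℤ] ℤ))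
    (v : M) (hv : B v v ≠ 0)
    (K : Type*) [AddCommGroup K] [Module ℤ K]
    (ι : K →ₗ[ℤ] M) (hι : Function.Injective ι)
    (hrange : LinearMap.range ι = LinearMap.ker (B v))
    (g : K ≃ₗ[ℤ] K)
    (hg : ∀ x y : K, B (ι (g x)) (ι (g y)) = B (ι x) (ι y))
    (ε : ℤ) (hε : ε = 1 ∨ ε = -1)
    (hdisc : ∀ f : K →ₗ[ℤ] ℤ, ∃ y : K,
      ∀ x : K, f (g.symm x) - ε * f x = B (ι y) (ι x)) :
    ∃ g' : M ≃ₗ[ℤ] M,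
      (∀ x y, B (g' x) (g' y) = B x y) ∧
      g' v = ε • v ∧
      (∀ x : K, g' (ι x) = ι (g x)) := by
  have hε2 : ε * ε = 1 := by rcases hε with h | h <;> simp [h]
  have hinj := hunimod.injective
  have hBs : ∀ (z w : M) (c : ℤ), B z (c • w) = c * B z w := by
    intro z w c
    rw [map_zsmul, zsmul_eq_mul]
    simp
  obtain ⟨F, hFiso, hFv, hFι⟩ := extend_aux B hsymm hinj v hv ι hrange g hg ε hε2 hdisc
  -- hypotheses for g.symm
  have hg' : ∀ x y : K, B (ι (g.symm x)) (ι (g.symm y)) = B (ι x) (ι y) := by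
    intro x y
    have := hg (g.symm x) (g.symm y)
    rw [g.apply_symm_apply, g.apply_symm_apply] at this
    exact this.symm
  have hdisc' : ∀ f : K →ₗ[ℤ] ℤ, ∃ y : K,
      ∀ x : K, f (g.symm.symm x) - ε * f x = B (ι y) (ι x) := by
    intro f
    obtain ⟨y₁, hy₁⟩ := hdisc (f.comp (g : K →ₗ[ℤ] K))
    refine ⟨(-ε) • y₁, fun x => ?_⟩
    have h := hy₁ x
    simp only [LinearMap.comp_apply, LinearEquiv.coe_coe, g.apply_symm_apply] at h
    rw [LinearEquiv.symm_symm, map_zsmul, hsymm, hBs, hsymm]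
    -- h : f x - ε * f (g x) = B (ι y₁) (ι x)
    rw [← h]
    have hgoal : f (g x) - ε * f x = -ε * (f x - ε * f (g x)) := by
      have : ε * ε * f (g x) = f (g x) := by rw [hε2, one_mul]
      nlinarith [this]
    linarith [hgoal]
  obtain ⟨G, hGiso, hGv, hGι⟩ :=
    extend_aux B hsymm hinj v hv ι hrange g.symm hg' ε hε2 hdisc'
  -- cancellation: B v v • z = 0 → z = 0
  have hcancel : ∀ z : M, (B v v) • z = 0 → z = 0 := by
    intro z hz
    apply hinj (a₂ := 0)
    rw [map_zero]
    ext w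
    have h1 : B w ((B v v) • z) = 0 := by rw [hz, map_zero]
    rw [hBs] at h1
    rcases mul_eq_zero.mp h1 with h | h
    · exact absurd h hv
    · rw [LinearMap.zero_apply, hsymm]; exact h
  have hdecomp : ∀ m : M, ∃ x : K, (B v v) • m = ι x + (B v m) • v := by
    intro m
    have hmem : (B v v) • m - (B v m) • v ∈ LinearMap.ker (B v) := by
      simp only [LinearMap.mem_ker, map_sub]
      rw [hBs, hBs]
      ring
    rw [← hrange] at hmem
    obtain ⟨x, hx⟩ := hmem
    exact ⟨x, by rw [hx]; abel⟩
  have hεε : ε • (ε • v) = v := by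
    rw [← mul_zsmul, hε2, one_zsmul]
  have hGF : ∀ m : M, G (F m) = m := by
    intro m
    obtain ⟨x, hx⟩ := hdecomp m
    have hz : (B v v) • (G (F m) - m) = 0 := by
      rw [zsmul_sub, ← map_zsmul G, ← map_zsmul F, hx,
        map_add F (ι x) ((B v m) • v), map_add G,
        hFι, hGι, g.symm_apply_apply, map_zsmul F, hFv,
        map_zsmul G, map_zsmul G, hGv, hεε]
      abel
    exact sub_eq_zero.mp (hcancel _ hz)
  have hFG : ∀ m : M, F (G m) = m := by
    intro m
    obtain ⟨x, hx⟩ := hdecomp m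
    have hz : (B v v) • (F (G m) - m) = 0 := by
      rw [zsmul_sub, ← map_zsmul F, ← map_zsmul G, hx,
        map_add G (ι x) ((B v m) • v), map_add F,
        hGι, hFι, g.apply_symm_apply, map_zsmul G, hGv,
        map_zsmul F, map_zsmul F, hFv, hεε]
      abel
    exact sub_eq_zero.mp (hcancel _ hz)
  refine ⟨LinearEquiv.ofLinear F G (LinearMap.ext hFG) (LinearMap.ext hGF), ?_, ?_, ?_⟩
  · intro x y; exact hFiso x y
  · exact hFv
  · exact hFι
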